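/- Let σ > 0 and Λ > 0. Then ∫ x²·e^{−Λ·|x|} d(gaussianReal 0 σ²)(x) = σ²·(1 + Λ²·σ²) · ∫ e^{−Λ·|x|} d(gaussianReal 0 σ²)(x) − Λ·σ³·√(2/π). -/

import Mathlib

open MeasureTheory ProbabilityTheory Real Filter
open scoped NNReal ENNReal

lemma integral_gaussianReal_eq' (μ : ℝ) {v : ℝ≥0} (hv : v ≠ 0) (g : ℝ → ℝ) :
    ∫ x, g x ∂(gaussianReal μ v) = ∫ x, gaussianPDFReal μ v x * g x := by
  rw [gaussianReal_of_var_ne_zero _ hv]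
  have h : gaussianPDF μ v = fun x => ((gaussianPDFReal μ v x).toNNReal : ℝ≥0∞) := rfl
  rw [h, integral_withDensity_eq_integral_smul
    (measurable_gaussianPDFReal μ v).real_toNNReal g]
  congr 1
  ext x
  rw [NNReal.smul_def, Real.coe_toNNReal _ (gaussianPDFReal_nonneg μ v x), smul_eq_mul]

/-- Exponentially reweighted second moment of the half-normal distribution
with scale `σ`:
`∫ x²·e^{−Λ|x|} = σ²·(1 + Λ²σ²)·∫ e^{−Λ|x|} − Λσ³·√(2/π)` (all integrals
w.r.t. `gaussianReal 0 σ²`). -/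
theorem halfNormal_tilted_second_moment (σ : ℝ≥0) (hσ : 0 < σ) (Λ : ℝ)
    (hΛ : 0 < Λ) :
    ∫ x, x ^ 2 * Real.exp (-Λ * |x|) ∂(gaussianReal 0 (σ ^ 2)) =
      (σ : ℝ) ^ 2 * (1 + Λ ^ 2 * (σ : ℝ) ^ 2) *
          (∫ x, Real.exp (-Λ * |x|) ∂(gaussianReal 0 (σ ^ 2))) -
        Λ * (σ : ℝ) ^ 3 * Real.sqrt (2 / Real.pi) := by
  have hs : 0 < (σ : ℝ) := hσ
  set s : ℝ := (σ : ℝ) with hs_def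
  have hs0 : s ≠ 0 := hs.ne'
  have hv : (σ ^ 2 : ℝ≥0) ≠ 0 := pow_ne_zero _ hσ.ne'
  have hcoe : ((σ ^ 2 : ℝ≥0) : ℝ) = s ^ 2 := by rw [NNReal.coe_pow]
  set p : ℝ → ℝ := gaussianPDFReal 0 (σ ^ 2) with hp_def
  have hp : ∀ x : ℝ, p x = (Real.sqrt (2 * π * s ^ 2))⁻¹ * Real.exp (-x ^ 2 / (2 * s ^ 2)) := by
    intro x
    simp only [hp_def, gaussianPDFReal, sub_zero, hcoe]
  set α : ℝ := s ^ 2 * (1 + Λ ^ 2 * s ^ 2) with hα_def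
  rw [integral_gaussianReal_eq' _ hv, integral_gaussianReal_eq' _ hv]
  set b : ℝ := (2 * s ^ 2)⁻¹ with hb_def
  have hb : 0 < b := by positivity
  have hbx : ∀ x : ℝ, -x ^ 2 / (2 * s ^ 2) = -b * x ^ 2 := by
    intro x; rw [hb_def]; ring
  -- integrability of the two integrands w.r.t. volume
  have hInt2 : Integrable (fun x : ℝ => x ^ 2 * Real.exp (-b * x ^ 2)) := by
    have h := integrable_rpow_mul_exp_neg_mul_sq hb (s := 2) (by norm_num)
    exact h.congr (Filter.Eventually.of_forall fun x => by
      norm_num [Real.rpow_natCast])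
  have hmE : Measurable fun x : ℝ => Real.exp (-Λ * |x|) :=
    (measurable_abs.const_mul (-Λ)).exp
  have hmp : Measurable p := measurable_gaussianPDFReal 0 (σ ^ 2)
  have hE1 : ∀ x : ℝ, Real.exp (-Λ * |x|) ≤ 1 := fun x => by
    rw [Real.exp_le_one_iff]
    have : 0 ≤ Λ * |x| := mul_nonneg hΛ.le (abs_nonneg x)
    linarith
  have hIf1 : Integrable (fun x : ℝ => p x * (x ^ 2 * Real.exp (-Λ * |x|))) := by
    refine Integrable.mono' (hInt2.const_mul (Real.sqrt (2 * π * s ^ 2))⁻¹)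
      ((hmp.mul ((measurable_id.pow_const 2).mul hmE)).aestronglyMeasurable)
      (Filter.Eventually.of_forall fun x => ?_)
    have h0 : 0 ≤ p x := gaussianPDFReal_nonneg _ _ x
    have hex : (0:ℝ) < Real.exp (-Λ * |x|) := Real.exp_pos _
    rw [Real.norm_eq_abs, abs_of_nonneg (by positivity)]
    calc p x * (x ^ 2 * Real.exp (-Λ * |x|)) ≤ p x * (x ^ 2 * 1) := by
          gcongr
          exact hE1 x
      _ = (Real.sqrt (2 * π * s ^ 2))⁻¹ * (x ^ 2 * Real.exp (-b * x ^ 2)) := by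
          rw [hp x, ← hbx x]; ring
  have hIf2 : Integrable (fun x : ℝ => p x * Real.exp (-Λ * |x|)) := by
    refine Integrable.mono' (integrable_gaussianPDFReal 0 (σ ^ 2))
      ((hmp.mul hmE).aestronglyMeasurable) (Filter.Eventually.of_forall fun x => ?_)
    have h0 : 0 ≤ p x := gaussianPDFReal_nonneg _ _ x
    have hex : (0:ℝ) < Real.exp (-Λ * |x|) := Real.exp_pos _
    rw [Real.norm_eq_abs, abs_of_nonneg (by positivity)]
    calc p x * Real.exp (-Λ * |x|) ≤ p x * 1 := by gcongr; exact hE1 x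
      _ = p x := mul_one _
  -- the combined integrand
  set ψ : ℝ → ℝ := fun x => (x ^ 2 - α) * (Real.exp (-Λ * |x|) * p x) with hψ_def
  have hIψ : Integrable ψ := by
    have h : ψ = fun x => p x * (x ^ 2 * Real.exp (-Λ * |x|))
        - α * (p x * Real.exp (-Λ * |x|)) := by
      funext x; rw [hψ_def]; ring
    rw [h]
    exact hIf1.sub (hIf2.const_mul α)
  set F : ℝ → ℝ := fun t => (t ^ 2 - α) * (Real.exp (-Λ * t) * p t) with hF_def
  have hψF : ∀ x, ψ x = F |x| := by
    intro x
    rw [hψ_def, hF_def]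
    simp only
    rw [hp x, hp |x|, sq_abs]
  set G : ℝ → ℝ := fun x => (-s ^ 2 * x + Λ * s ^ 4) * (Real.exp (-Λ * x) * p x) with hG_def
  have hGeq : G = fun y => (Real.sqrt (2 * π * s ^ 2))⁻¹ *
      ((-s ^ 2 * y + Λ * s ^ 4) * Real.exp (-Λ * y - y ^ 2 / (2 * s ^ 2))) := by
    funext y
    rw [hG_def]
    simp only
    rw [hp y, show -Λ * y - y ^ 2 / (2 * s ^ 2) = -Λ * y + -y ^ 2 / (2 * s ^ 2) by ring,
      Real.exp_add]
    ring
  have hG : ∀ x : ℝ, HasDerivAt G (F x) x := by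
    intro x
    have h1 : HasDerivAt (fun y : ℝ => -Λ * y - y ^ 2 / (2 * s ^ 2)) (-Λ - x / s ^ 2) x := by
      have h := (((hasDerivAt_id x).const_mul (-Λ)).sub
        (((hasDerivAt_id x).pow 2).div_const (2 * s ^ 2)))
      refine h.congr_deriv (Eq.symm ?_)
      field_simp
      simp only [id, Nat.reduceSub, Nat.cast_ofNat, pow_one]
      ring
    have h2 := h1.exp
    have h3 : HasDerivAt (fun y : ℝ => -s ^ 2 * y + Λ * s ^ 4) (-s ^ 2) x := by
      simpa using ((hasDerivAt_id x).const_mul (-s ^ 2)).add_const (Λ * s ^ 4)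
    have h4 := (h3.mul h2).const_mul (Real.sqrt (2 * π * s ^ 2))⁻¹
    rw [hGeq]
    refine h4.congr_deriv (Eq.symm ?_)
    rw [hF_def]
    simp only
    rw [hp x, show -Λ * x - x ^ 2 / (2 * s ^ 2) = -Λ * x + -x ^ 2 / (2 * s ^ 2) by ring,
      Real.exp_add]
    field_simp
    ring
  -- limit of G at infinity
  have hexp0 : Tendsto (fun y : ℝ => Real.exp (-(1/2) * y)) atTop (nhds 0) := by
    exact Real.tendsto_exp_atBot.comp
      ((tendsto_const_mul_atBot_of_neg (by norm_num : -(1/2:ℝ) < 0)).mpr tendsto_id)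
  have TA : Tendsto (fun y : ℝ => y * Real.exp (-b * y ^ 2)) atTop (nhds 0) := by
    have h := (rpow_mul_exp_neg_mul_sq_isLittleO_exp_neg hb 1).isBigO.trans_tendsto hexp0
    exact h.congr' (Filter.Eventually.of_forall fun y => by rw [Real.rpow_one])
  have TB : Tendsto (fun y : ℝ => Real.exp (-b * y ^ 2)) atTop (nhds 0) := by
    have h := (rpow_mul_exp_neg_mul_sq_isLittleO_exp_neg hb 0).isBigO.trans_tendsto hexp0
    exact h.congr' (Filter.Eventually.of_forall fun y => by rw [Real.rpow_zero, one_mul])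
  have TC : Tendsto (fun y : ℝ => Real.exp (-Λ * y)) atTop (nhds 0) := by
    exact Real.tendsto_exp_atBot.comp
      ((tendsto_const_mul_atBot_of_neg (neg_neg_iff_pos.mpr hΛ)).mpr tendsto_id)
  have hGlim : Tendsto G atTop (nhds 0) := by
    rw [hGeq]
    have hfac : ∀ y : ℝ, (-s ^ 2 * y + Λ * s ^ 4) * Real.exp (-Λ * y - y ^ 2 / (2 * s ^ 2))
        = (-s ^ 2 * (y * Real.exp (-b * y ^ 2)) + Λ * s ^ 4 * Real.exp (-b * y ^ 2))
          * Real.exp (-Λ * y) := by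
      intro y
      rw [show -Λ * y - y ^ 2 / (2 * s ^ 2) = -b * y ^ 2 + -Λ * y by rw [hb_def]; ring,
        Real.exp_add]
      ring
    have hT : Tendsto (fun y : ℝ =>
        (-s ^ 2 * (y * Real.exp (-b * y ^ 2)) + Λ * s ^ 4 * Real.exp (-b * y ^ 2))
          * Real.exp (-Λ * y)) atTop (nhds 0) := by
      have := ((TA.const_mul (-s ^ 2)).add (TB.const_mul (Λ * s ^ 4))).mul TC
      simpa using this
    have := hT.const_mul (Real.sqrt (2 * π * s ^ 2))⁻¹
    simp only [mul_zero] at this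
    exact this.congr fun y => by rw [hfac y]
  -- FTC on [0, ∞)
  have hIF : IntegrableOn F (Set.Ioi (0 : ℝ)) := by
    refine (hIψ.integrableOn).congr_fun (fun x hx => ?_) measurableSet_Ioi
    rw [hψF x, abs_of_pos hx]
  have hFTC : ∫ x in Set.Ioi (0 : ℝ), F x = 0 - G 0 :=
    integral_Ioi_of_hasDerivAt_of_tendsto (hG 0).continuousAt.continuousWithinAt
      (fun x _ => hG x) hIF hGlim
  have hG0 : G 0 = Λ * s ^ 4 * (Real.sqrt (2 * π * s ^ 2))⁻¹ := by
    rw [hG_def]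
    simp only
    rw [hp 0]
    norm_num
  -- evenness
  have hψint : ∫ x, ψ x = 2 * ∫ x in Set.Ioi (0 : ℝ), F x := by
    rw [show (fun x => ψ x) = fun x => F |x| from funext hψF]
    exact integral_comp_abs (f := F)
  -- numeric simplification
  have hπ : (0:ℝ) < π := Real.pi_pos
  have hsqrt : Real.sqrt (2 * π * s ^ 2) = Real.sqrt (2 * π) * s := by
    rw [Real.sqrt_mul (by positivity), Real.sqrt_sq hs.le]
  have hmul : Real.sqrt (2 / π) * Real.sqrt (2 * π) = 2 := by
    rw [← Real.sqrt_mul (by positivity),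
      show 2 / π * (2 * π) = 2 ^ 2 by field_simp, Real.sqrt_sq (by norm_num)]
  have hsqpos : (0:ℝ) < Real.sqrt (2 * π) := Real.sqrt_pos.mpr (by positivity)
  have h2 : Real.sqrt 2 * Real.sqrt 2 = 2 := Real.mul_self_sqrt (by norm_num)
  have hsπ : (0:ℝ) < Real.sqrt π := Real.sqrt_pos.mpr hπ
  have hs2 : (0:ℝ) < Real.sqrt 2 := Real.sqrt_pos.mpr (by norm_num)
  have hψval : ∫ x, ψ x = -(Λ * s ^ 3 * Real.sqrt (2 / π)) := by
    rw [hψint, hFTC, hG0, hsqrt, Real.sqrt_mul (by norm_num : (0:ℝ) ≤ 2) π,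
      Real.sqrt_div (by norm_num : (0:ℝ) ≤ 2) π]
    field_simp
    linear_combination (Λ * s ^ 3) * h2
  -- final assembly
  have hsub : (∫ x, p x * (x ^ 2 * Real.exp (-Λ * |x|)))
      - α * ∫ x, p x * Real.exp (-Λ * |x|) = ∫ x, ψ x := by
    rw [← integral_const_mul, ← integral_sub hIf1 (hIf2.const_mul α)]
    congr 1
    funext x
    rw [hψ_def]
    ring
  have : (∫ x, p x * (x ^ 2 * Real.exp (-Λ * |x|)))
      - α * ∫ x, p x * Real.exp (-Λ * |x|) = -(Λ * s ^ 3 * Real.sqrt (2 / π)) := by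
    rw [hsub, hψval]
  rw [hα_def] at this
  linarith [this]
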